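/- Let C_1, C_2, ..., C_r be (convex polyhedral) cones in ℝ^n such that ⋂_{i=1}^r C_i = {0}. Then there exists α_0 > 0 such that for every δ > 0 and every X ∈ ℝ^n satisfying dist(X, C_i) ≤ δ for all i = 1, ..., r, we have ‖X‖ ≤ α_0 δ. -/

import Mathlib

open scoped RealInnerProductSpace
open Pointwise

/-- A (convex polyhedral) cone in `ℝ^n`: nonnegative combinations of finitely many vectors. -/
def IsPolyhedralCone {n : ℕ} (C : Set (EuclideanSpace ℝ (Fin n))) : Prop :=
  ∃ (k : ℕ) (v : Fin k → EuclideanSpace ℝ (Fin n)),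
    C = {x | ∃ lam : Fin k → ℝ, (∀ i, 0 ≤ lam i) ∧ x = ∑ i, lam i • v i}

/-- `F` is a face of the cone `C`. -/
def IsFaceOf {n : ℕ} (F C : Set (EuclideanSpace ℝ (Fin n))) : Prop :=
  F = C ∨ ∃ u : EuclideanSpace ℝ (Fin n),
    (∀ x ∈ C, ⟪u, x⟫ ≤ 0) ∧ F = C ∩ {x | ⟪u, x⟫ = 0}

/-- The dimension of a cone: the dimension of its linear span. -/
noncomputable def coneDim {n : ℕ} (C : Set (EuclideanSpace ℝ (Fin n))) : ℕ :=
  Module.finrank ℝ (Submodule.span ℝ C)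

/-- A facet of `C` is a face of dimension `dim C - 1`. -/
def IsFacetOf {n : ℕ} (σ C : Set (EuclideanSpace ℝ (Fin n))) : Prop :=
  IsFaceOf σ C ∧ coneDim σ + 1 = coneDim C

/-- The polar of a cone. -/
def polarCone {n : ℕ} (C : Set (EuclideanSpace ℝ (Fin n))) :
    Set (EuclideanSpace ℝ (Fin n)) :=
  {u | ∀ x ∈ C, ⟪u, x⟫ ≤ 0}

/-- A complete polyhedral fan in `ℝ^n`. -/
def IsCompleteFan {n : ℕ} (𝓕 : Set (Set (EuclideanSpace ℝ (Fin n)))) : Prop :=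
  𝓕.Finite ∧ (∀ C ∈ 𝓕, IsPolyhedralCone C) ∧
    (∀ C ∈ 𝓕, ∀ F, IsFaceOf F C → F ∈ 𝓕) ∧
    (∀ C ∈ 𝓕, ∀ C' ∈ 𝓕, IsFaceOf (C ∩ C') C ∧ IsFaceOf (C ∩ C') C') ∧
    ⋃₀ 𝓕 = Set.univ

/-- Right-hand side of the toric differential inclusion given by `𝓕` and `δ`. -/
noncomputable def toricRHS {n : ℕ} (𝓕 : Set (Set (EuclideanSpace ℝ (Fin n))))
    (δ : ℝ) (X : EuclideanSpace ℝ (Fin n)) : Set (EuclideanSpace ℝ (Fin n)) :=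
  polarCone (⋂₀ {C | C ∈ 𝓕 ∧ Metric.infDist X C ≤ δ})

/-- The quasi-toric differential inclusion given by `𝓕` and `d` is well-defined. -/
def QTDIWellDefined {n : ℕ} (𝓕 : Set (Set (EuclideanSpace ℝ (Fin n))))
    (d : Fin n → ℝ) : Prop :=
  ∀ C ∈ 𝓕, ∀ C' ∈ 𝓕, ∀ X : EuclideanSpace ℝ (Fin n),
    ∀ (hk : coneDim C < n) (hm : coneDim C' < n),
      Metric.infDist X C ≤ d ⟨coneDim C, hk⟩ →
      Metric.infDist X C' ≤ d ⟨coneDim C', hm⟩ →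
      ∃ hh : coneDim (C ∩ C') < n,
        Metric.infDist X (C ∩ C') ≤ d ⟨coneDim (C ∩ C'), hh⟩

/-- Every finitely generated cone is closed. -/
lemma isClosed_coneSet : ∀ (k : ℕ) {n : ℕ} (v : Fin k → EuclideanSpace ℝ (Fin n)),
    IsClosed {x | ∃ lam : Fin k → ℝ, (∀ i, 0 ≤ lam i) ∧ x = ∑ i, lam i • v i} := by
  intro k
  induction k with
  | zero =>
    intro n v
    have : {x : EuclideanSpace ℝ (Fin n) |
        ∃ lam : Fin 0 → ℝ, (∀ i, 0 ≤ lam i) ∧ x = ∑ i, lam i • v i} = {0} := by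
      ext x; simp
    rw [this]; exact isClosed_singleton
  | succ m ih =>
    intro n v
    by_cases hli : LinearIndependent ℝ v
    · -- image of the closed orthant under a closed embedding
      set L := Fintype.linearCombination ℝ v with hL
      have hker : LinearMap.ker L = ⊥ := by
        rw [LinearMap.ker_eq_bot']
        intro g hg
        have := (Fintype.linearIndependent_iff.mp hli) g
          (by simpa [hL, Fintype.linearCombination_apply] using hg)
        funext i; exact this i
      have hemb := LinearMap.isClosedEmbedding_of_injective hker
      have horth : IsClosed {lam : Fin (m + 1) → ℝ | ∀ i, 0 ≤ lam i} := by
        have : {lam : Fin (m + 1) → ℝ | ∀ i, 0 ≤ lam i}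
            = ⋂ i, {lam : Fin (m + 1) → ℝ | 0 ≤ lam i} := by ext; simp
        rw [this]
        exact isClosed_iInter fun i =>
          isClosed_le continuous_const (continuous_apply i)
      have himg : {x : EuclideanSpace ℝ (Fin n) |
          ∃ lam : Fin (m + 1) → ℝ, (∀ i, 0 ≤ lam i) ∧ x = ∑ i, lam i • v i}
          = L '' {lam | ∀ i, 0 ≤ lam i} := by
        ext x
        simp only [Set.mem_image, Set.mem_setOf_eq, hL, Fintype.linearCombination_apply]
        constructor
        · rintro ⟨lam, h1, h2⟩; exact ⟨lam, h1, h2.symm⟩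
        · rintro ⟨lam, h1, h2⟩; exact ⟨lam, h1, h2.symm⟩
      rw [himg]
      exact hemb.isClosedMap _ horth
    · -- there is a nontrivial relation; reduce to cones with one fewer generator
      obtain ⟨g, hgsum, i₁, hgi₁⟩ := Fintype.not_linearIndependent_iff.mp hli
      obtain ⟨c, hcsum, i₂, hci₂⟩ :
          ∃ c : Fin (m + 1) → ℝ, (∑ i, c i • v i = 0) ∧ ∃ i, 0 < c i := by
        rcases hgi₁.lt_or_gt with h | h
        · exact ⟨-g, by simpa using hgsum, i₁, by simpa using h⟩
        · exact ⟨g, hgsum, i₁, h⟩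
      have key : {x : EuclideanSpace ℝ (Fin n) |
          ∃ lam : Fin (m + 1) → ℝ, (∀ i, 0 ≤ lam i) ∧ x = ∑ i, lam i • v i}
          = ⋃ i₀ : Fin (m + 1), {x | ∃ lam : Fin m → ℝ,
              (∀ i, 0 ≤ lam i) ∧ x = ∑ i, lam i • v (i₀.succAbove i)} := by
        ext x
        constructor
        · rintro ⟨lam, hlam, rfl⟩
          classical
          obtain ⟨i₀, hi₀T, hti₀⟩ :=
            (Finset.univ.filter (fun i => 0 < c i)).exists_mem_eq_inf'
              ⟨i₂, by simp [hci₂]⟩ (fun i => lam i / c i)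
          have hci₀ : 0 < c i₀ := by simpa using hi₀T
          set t : ℝ := (Finset.univ.filter (fun i => 0 < c i)).inf'
            ⟨i₂, by simp [hci₂]⟩ (fun i => lam i / c i) with ht
          have htval : t = lam i₀ / c i₀ := hti₀
          have htnonneg : 0 ≤ t := by
            rw [htval]; exact div_nonneg (hlam i₀) hci₀.le
          have hlam'nonneg : ∀ i, 0 ≤ lam i - t * c i := by
            intro i
            by_cases hci : 0 < c i
            · have hle : t ≤ lam i / c i := Finset.inf'_le _ (by simp [hci])
              have := (le_div_iff₀ hci).mp hle
              linarith
            · push_neg at hci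
              have : t * c i ≤ 0 := mul_nonpos_of_nonneg_of_nonpos htnonneg hci
              linarith [hlam i]
          have hlam'i₀ : lam i₀ - t * c i₀ = 0 := by
            rw [htval]; field_simp; ring
          have hsum' : ∑ i, (lam i - t * c i) • v i = ∑ i, lam i • v i := by
            simp only [sub_smul]
            rw [Finset.sum_sub_distrib]
            have h2 : ∑ i, (t * c i) • v i = t • ∑ i, c i • v i := by
              rw [Finset.smul_sum]; congr 1; ext i; rw [smul_smul]
            rw [h2, hcsum, smul_zero, sub_zero]
          refine Set.mem_iUnion.mpr ⟨i₀, fun j => lam (i₀.succAbove j)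
            - t * c (i₀.succAbove j), fun j => hlam'nonneg _, ?_⟩
          have hs := Fin.sum_univ_succAbove (fun i => (lam i - t * c i) • v i) i₀
          rw [← hsum', hs, hlam'i₀, zero_smul, zero_add]
        · intro hx
          obtain ⟨i₀, lam, hlam, rfl⟩ := Set.mem_iUnion.mp hx
          classical
          refine ⟨Fin.insertNth (α := fun _ => ℝ) i₀ 0 lam, fun i => ?_, ?_⟩
          · by_cases h : i = i₀
            · subst h; simp
            · obtain ⟨j, rfl⟩ := Fin.exists_succAbove_eq (Ne.symm h).symm
              simp [hlam j]
          · rw [Fin.sum_univ_succAbove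
              (fun i => Fin.insertNth (α := fun _ => ℝ) i₀ 0 lam i • v i) i₀]
            simp
      rw [key]
      exact isClosed_iUnion_of_finite fun i₀ => ih (fun j => v (i₀.succAbove j))

lemma IsPolyhedralCone.isClosed {n : ℕ} {C : Set (EuclideanSpace ℝ (Fin n))}
    (h : IsPolyhedralCone C) : IsClosed C := by
  obtain ⟨k, v, rfl⟩ := h
  exact isClosed_coneSet k v

lemma IsPolyhedralCone.zero_mem {n : ℕ} {C : Set (EuclideanSpace ℝ (Fin n))}
    (h : IsPolyhedralCone C) : (0 : EuclideanSpace ℝ (Fin n)) ∈ C := by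
  obtain ⟨k, v, rfl⟩ := h
  exact ⟨0, fun i => le_refl 0, by simp⟩

lemma IsPolyhedralCone.smul_mem {n : ℕ} {C : Set (EuclideanSpace ℝ (Fin n))}
    (h : IsPolyhedralCone C) {c : ℝ} (hc : 0 ≤ c) {x : EuclideanSpace ℝ (Fin n)}
    (hx : x ∈ C) : c • x ∈ C := by
  obtain ⟨k, v, rfl⟩ := h
  obtain ⟨lam, hlam, rfl⟩ := hx
  exact ⟨fun i => c * lam i, fun i => mul_nonneg hc (hlam i), by
    rw [Finset.smul_sum]; congr 1; ext i; rw [smul_smul]⟩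

lemma IsPolyhedralCone.smul_set_eq {n : ℕ} {C : Set (EuclideanSpace ℝ (Fin n))}
    (h : IsPolyhedralCone C) {c : ℝ} (hc : 0 < c) : c • C = C := by
  apply Set.Subset.antisymm
  · rintro x ⟨y, hy, rfl⟩
    exact h.smul_mem hc.le hy
  · intro x hx
    exact ⟨c⁻¹ • x, h.smul_mem (by positivity) hx, by
      simp only [smul_smul, mul_inv_cancel₀ hc.ne', one_smul]⟩

/-- Points close to finitely many cones intersecting only at the origin
are close to the origin. -/
theorem norm_le_of_close_to_cones_inter_zero {n r : ℕ} (hr : 0 < r)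
    (C : Fin r → Set (EuclideanSpace ℝ (Fin n)))
    (hC : ∀ i, IsPolyhedralCone (C i)) (hinter : ⋂ i, C i = {0}) :
    ∃ α₀ > 0, ∀ δ > 0, ∀ X : EuclideanSpace ℝ (Fin n),
      (∀ i, Metric.infDist X (C i) ≤ δ) → ‖X‖ ≤ α₀ * δ := by
  classical
  have hclosed : ∀ i, IsClosed (C i) := fun i => (hC i).isClosed
  have hne : ∀ i, (C i).Nonempty := fun i => ⟨0, (hC i).zero_mem⟩
  set F : EuclideanSpace ℝ (Fin n) → ℝ := fun x => ∑ i, Metric.infDist x (C i) with hF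
  have hFcont : Continuous F :=
    continuous_finset_sum _ fun i _ => Metric.continuous_infDist_pt (C i)
  by_cases hsph : (Metric.sphere (0 : EuclideanSpace ℝ (Fin n)) 1).Nonempty
  · obtain ⟨u, hu, hmin⟩ :=
      (isCompact_sphere (0 : EuclideanSpace ℝ (Fin n)) 1).exists_isMinOn hsph
        hFcont.continuousOn
    have hm0 : 0 ≤ F u := Finset.sum_nonneg fun i _ => Metric.infDist_nonneg
    have hm : 0 < F u := by
      rcases hm0.lt_or_eq with h | h
      · exact h
      · exfalso
        have hall : ∀ i ∈ Finset.univ, Metric.infDist u (C i) = 0 :=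
          (Finset.sum_eq_zero_iff_of_nonneg
            (fun i _ => Metric.infDist_nonneg)).mp h.symm
        have humem : u ∈ ⋂ i, C i := Set.mem_iInter.mpr fun i =>
          ((hclosed i).mem_iff_infDist_zero (hne i)).mpr (hall i (Finset.mem_univ i))
        rw [hinter] at humem
        have : ‖u‖ = 1 := mem_sphere_zero_iff_norm.mp hu
        rw [humem] at this
        simp at this
    refine ⟨r / F u, div_pos (Nat.cast_pos.mpr hr) hm, fun δ hδ X hd => ?_⟩
    by_cases hX : X = 0
    · rw [hX, norm_zero]
      positivity
    · have hXn : 0 < ‖X‖ := norm_pos_iff.mpr hX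
      have hcX : (‖X‖⁻¹ : ℝ) ≠ 0 := by positivity
      have huX : ‖X‖⁻¹ • X ∈ Metric.sphere (0 : EuclideanSpace ℝ (Fin n)) 1 := by
        rw [mem_sphere_zero_iff_norm, norm_smul, norm_inv, norm_norm,
          inv_mul_cancel₀ hXn.ne']
      have h1 : F u ≤ F (‖X‖⁻¹ • X) := hmin huX
      have h2 : F (‖X‖⁻¹ • X) = ‖X‖⁻¹ * ∑ i, Metric.infDist X (C i) := by
        rw [hF, Finset.mul_sum]
        refine Finset.sum_congr rfl fun i _ => ?_
        have := infDist_smul₀ hcX (C i) X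
        rw [(hC i).smul_set_eq (by positivity : (0:ℝ) < ‖X‖⁻¹)] at this
        rw [this, norm_inv, norm_norm]
      have h3 : ∑ i, Metric.infDist X (C i) ≤ (r : ℝ) * δ := by
        calc ∑ i, Metric.infDist X (C i) ≤ ∑ _i : Fin r, δ :=
              Finset.sum_le_sum fun i _ => hd i
          _ = (r : ℝ) * δ := by simp [mul_comm]
      have h4 : F u * ‖X‖ ≤ (r : ℝ) * δ := by
        have : F u ≤ ‖X‖⁻¹ * ((r : ℝ) * δ) := by
          rw [h2] at h1
          calc F u ≤ ‖X‖⁻¹ * ∑ i, Metric.infDist X (C i) := h1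
            _ ≤ ‖X‖⁻¹ * ((r : ℝ) * δ) := by
                apply mul_le_mul_of_nonneg_left h3 (by positivity)
        calc F u * ‖X‖ ≤ (‖X‖⁻¹ * ((r : ℝ) * δ)) * ‖X‖ :=
              mul_le_mul_of_nonneg_right this hXn.le
          _ = (r : ℝ) * δ := by field_simp
      rw [div_mul_eq_mul_div, le_div_iff₀ hm]
      linarith [h4]
  · refine ⟨1, one_pos, fun δ hδ X _ => ?_⟩
    have hX : X = 0 := by
      by_contra hX
      exact hsph ⟨‖X‖⁻¹ • X, by
        rw [mem_sphere_zero_iff_norm, norm_smul, norm_inv, norm_norm,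
          inv_mul_cancel₀ (norm_pos_iff.mpr hX).ne']⟩
    rw [hX, norm_zero]
    linarith
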